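/- For every n ≥ 2 there exists an n×n real matrix A with nonnegative entries, a_{11} = 0, spectral radius r(A) = 1, having exactly two distinct eigenvalues, and whose spread is exactly s(A) = n/(2(n − 1)). -/

import Mathlib

open Matrix Polynomial

/-- The eigenvalues of a real square matrix: the multiset of roots (with multiplicity)
of its characteristic polynomial over `ℂ`. -/
noncomputable def eigs {n : ℕ} (A : Matrix (Fin n) (Fin n) ℝ) : Multiset ℂ :=
  ((A.map Complex.ofReal).charpoly).roots

/-- The spectral radius: the maximum of `|λ|` over the eigenvalues `λ`. -/
noncomputable def specRad {n : ℕ} (A : Matrix (Fin n) (Fin n) ℝ) : ℝ :=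
  sSup {r : ℝ | ∃ μ ∈ eigs A, r = ‖μ‖}

/-- The spread: the maximum of `|λ - μ|` over pairs of eigenvalues `λ, μ`. -/
noncomputable def spread {n : ℕ} (A : Matrix (Fin n) (Fin n) ℝ) : ℝ :=
  sSup {r : ℝ | ∃ μ ∈ eigs A, ∃ ν ∈ eigs A, r = ‖μ - ν‖}
noncomputable def nu (m : ℕ) : ℝ := 1 / m
noncomputable def dd (m : ℕ) : ℝ := ((m:ℝ) + 1) / (2 * m)
noncomputable def lam (m : ℕ) : ℝ := ((m:ℝ) - 1) / (2 * m)
noncomputable def gg (m j : ℕ) : ℝ :=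
  (m.choose j) * dd m * (nu m)^(m-j) - ((m+1).choose j) * (nu m)^(m+1-j)

lemma mpos {m : ℕ} (h1 : 1 ≤ m) : (0:ℝ) < m := by exact_mod_cast h1
lemma nu_pos {m : ℕ} (h1 : 1 ≤ m) : 0 < nu m := by
  have := mpos h1; simp [nu]; positivity
lemma dd_nonneg {m : ℕ} (h1 : 1 ≤ m) : 0 ≤ dd m := by
  have := mpos h1; unfold dd; positivity
lemma lam_nonneg {m : ℕ} (h1 : 1 ≤ m) : 0 ≤ lam m := by
  have := mpos h1
  have : (1:ℝ) ≤ m := by exact_mod_cast h1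
  unfold lam
  apply div_nonneg <;> nlinarith
lemma lam_lt_one {m : ℕ} (h1 : 1 ≤ m) : lam m < 1 := by
  have := mpos h1
  unfold lam
  rw [div_lt_one (by linarith)]
  linarith

lemma gg_nonneg {m : ℕ} (h1 : 1 ≤ m) {j : ℕ} (hj : j < m) : 0 ≤ gg m j := by
  have hnu := nu_pos h1
  have hm := mpos h1
  have hsub : m + 1 - j = (m - j) + 1 := by omega
  rw [gg, hsub, pow_succ]
  have hnat : 2 * ((m+1).choose j) ≤ (m+1) * (m.choose j) := by
    have h2 : m.choose j * (m + 1) = (m+1).choose j * (m + 1 - j) := Nat.choose_mul_succ_eq m j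
    have : 2 ≤ m + 1 - j := by omega
    nlinarith [Nat.choose_pos (le_of_lt hj)]
  have hcast : 2 * (((m+1).choose j):ℝ) ≤ (m+1) * (m.choose j) := by exact_mod_cast hnat
  have hd : ((m+1).choose j : ℝ) * nu m ≤ (m.choose j) * dd m := by
    rw [nu, dd, mul_one_div, ← mul_div_assoc, div_le_div_iff₀ hm (by positivity)]
    nlinarith
  calc (0:ℝ) ≤ ((m.choose j) * dd m - ((m+1).choose j) * nu m) * (nu m)^(m-j) := by
        apply mul_nonneg (by linarith) (le_of_lt (pow_pos hnu _))
    _ = (m.choose j) * dd m * (nu m)^(m-j) - ((m+1).choose j) * ((nu m)^(m-j) * nu m) := by ring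

lemma lam_add_nu (m : ℕ) (h1 : 1 ≤ m) : lam m + nu m = dd m := by
  have hm0 : (m:ℝ) ≠ 0 := ne_of_gt (mpos h1)
  rw [lam, nu, dd]; field_simp; ring

lemma top_coeff (m : ℕ) (h1 : 1 ≤ m) : ((m:ℝ) + 1) * nu m = 2 * dd m := by
  have hm0 : (m:ℝ) ≠ 0 := ne_of_gt (mpos h1)
  rw [nu, dd]; field_simp

lemma key (m : ℕ) (h1 : 1 ≤ m) (y : ℂ) :
    (y + (dd m : ℂ)) * y ^ m - ∑ j ∈ Finset.range m, ((gg m j : ℝ) : ℂ) * y ^ j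
      = (y - (lam m : ℂ)) * (y + (nu m : ℂ)) ^ m := by
  have e1 : y - (lam m : ℂ) = (y + (nu m : ℂ)) - (dd m : ℂ) := by
    have h := lam_add_nu m h1
    have : ((lam m : ℂ)) + ((nu m : ℂ)) = ((dd m : ℂ)) := by exact_mod_cast congrArg Complex.ofReal h
    linear_combination -this
  have hm1 : m + 1 - m = 1 := by omega
  have hA : (y + (nu m : ℂ)) ^ (m+1)
      = (∑ k ∈ Finset.range m, y ^ k * (nu m:ℂ) ^ (m + 1 - k) * ((m+1).choose k))
        + y ^ m * (nu m:ℂ) * ((m:ℂ)+1) + y^(m+1) := by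
    rw [add_pow, Finset.sum_range_succ, Finset.sum_range_succ, hm1,
      Nat.choose_succ_self_right, Nat.sub_self, Nat.choose_self]
    push_cast
    ring
  have hB : (y + (nu m : ℂ)) ^ m
      = (∑ k ∈ Finset.range m, y ^ k * (nu m:ℂ) ^ (m - k) * (m.choose k)) + y ^ m := by
    rw [add_pow, Finset.sum_range_succ, Nat.sub_self, Nat.choose_self]
    push_cast
    ring
  have hgg : ∑ j ∈ Finset.range m, ((gg m j:ℝ):ℂ) * y^j
      = ∑ k ∈ Finset.range m, ((dd m:ℂ) * (y^k * (nu m:ℂ)^(m-k) * (m.choose k))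
          - y^k * (nu m:ℂ)^(m+1-k) * ((m+1).choose k)) := by
    refine Finset.sum_congr rfl fun k _ => ?_
    rw [gg]
    push_cast
    ring
  have htopC : ((m:ℂ)+1) * (nu m:ℂ) = 2*(dd m:ℂ) := by
    exact_mod_cast congrArg Complex.ofReal (top_coeff m h1)
  rw [e1, sub_mul, ← pow_succ', hA, hB, hgg, Finset.sum_sub_distrib, ← Finset.mul_sum]
  linear_combination (-(y^m)) * htopC

lemma dd_add_lam (m : ℕ) (h1 : 1 ≤ m) : dd m + lam m = 1 := by
  have hm0 : (m:ℝ) ≠ 0 := ne_of_gt (mpos h1)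
  rw [lam, dd]; field_simp; ring

noncomputable def Mblk (m : ℕ) : Matrix (Fin m) (Fin m) ℝ :=
  Matrix.of fun i j => if (i:ℕ) = (j:ℕ) then dd m else if (i:ℕ) = (j:ℕ) + 1 then 1 else 0

noncomputable def Bmat (m : ℕ) : Matrix (Fin 1 ⊕ Fin m) (Fin 1 ⊕ Fin m) ℝ :=
  fromBlocks 0 (Matrix.of fun _ c => gg m (m - 1 - (c:ℕ)))
    (Matrix.of fun r _ => if (r:ℕ) = 0 then 1 else 0) (Mblk m)

lemma eval_charpoly' {N : Type*} [Fintype N] [DecidableEq N] (M : Matrix N N ℂ) (x : ℂ) :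
    M.charpoly.eval x = (x • (1 : Matrix N N ℂ) - M).det := by
  rw [Matrix.charpoly, ← Polynomial.coe_evalRingHom, RingHom.map_det]
  congr 1
  ext i j
  by_cases h : i = j
  · subst h; simp [Matrix.charmatrix_apply_eq, Matrix.one_apply]
  · simp [Matrix.charmatrix_apply_ne _ _ _ h, Matrix.one_apply, h]

lemma det_eval (m : ℕ) (h1 : 1 ≤ m) (x : ℂ) (hx : x ≠ (dd m : ℂ)) :
    (x • (1 : Matrix (Fin 1 ⊕ Fin m) (Fin 1 ⊕ Fin m) ℂ) - (Bmat m).map Complex.ofReal).det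
      = (x - 1) * (x - (lam m : ℂ))^m := by
  have hy0 : x - (dd m : ℂ) ≠ 0 := sub_ne_zero.mpr hx
  set S : Matrix (Fin m) (Fin m) ℂ :=
    x • (1 : Matrix (Fin m) (Fin m) ℂ) - (Mblk m).map Complex.ofReal with hSdef
  have hSapp : ∀ i j : Fin m, S i j =
      (if (i:ℕ) = (j:ℕ) then x - (dd m:ℂ) else 0) - (if (i:ℕ) = (j:ℕ) + 1 then 1 else 0) := by
    intro i j
    by_cases h : (i:ℕ) = (j:ℕ)
    · have : i = j := Fin.ext h
      subst this
      simp [hSdef, Matrix.sub_apply, Matrix.smul_apply, Matrix.one_apply, Mblk, h]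
    · have hij : i ≠ j := fun hh => h (congrArg Fin.val hh)
      simp [hSdef, Matrix.sub_apply, Matrix.smul_apply, Matrix.one_apply, Mblk, h, hij]
      split_ifs <;> simp
  have htri : S.BlockTriangular OrderDual.toDual := by
    intro i j hij
    have hij' : (i:ℕ) < (j:ℕ) := hij
    rw [hSapp]
    rw [if_neg (by omega), if_neg (by omega), sub_zero]
  have hdetS : S.det = (x - (dd m : ℂ))^m := by
    rw [Matrix.det_of_lowerTriangular S htri]
    have : ∀ i : Fin m, S i i = x - (dd m : ℂ) := by
      intro i; rw [hSapp]; simp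
    rw [Finset.prod_congr rfl (fun i _ => this i)]
    simp
  have hS0 : IsUnit S.det := by
    rw [hdetS]; exact (pow_ne_zero _ hy0).isUnit
  haveI : Invertible S := S.invertibleOfIsUnitDet hS0
  set P : Matrix (Fin 1) (Fin 1) ℂ := x • (1 : Matrix (Fin 1) (Fin 1) ℂ) with hP
  set Q : Matrix (Fin 1) (Fin m) ℂ :=
    Matrix.of (fun _ c => -((gg m (m - 1 - (c:ℕ)) : ℝ) : ℂ)) with hQ
  set ccolC : Matrix (Fin m) (Fin 1) ℂ :=
    Matrix.of (fun r _ => if (r:ℕ) = 0 then (1:ℂ) else 0) with hccol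
  have hE : x • (1 : Matrix (Fin 1 ⊕ Fin m) (Fin 1 ⊕ Fin m) ℂ) - (Bmat m).map Complex.ofReal
      = fromBlocks P Q (-ccolC) S := by
    ext i j
    rcases i with i | i <;> rcases j with j | j
    · simp [Bmat, Matrix.fromBlocks, Matrix.sub_apply, Matrix.smul_apply, Matrix.one_apply, hP]
    · simp [Bmat, Matrix.fromBlocks, Matrix.sub_apply, Matrix.smul_apply, Matrix.one_apply, hQ]
    · simp [Bmat, Matrix.fromBlocks, Matrix.sub_apply, Matrix.smul_apply, Matrix.one_apply, hccol]
      split_ifs <;> simp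
    · simp [Bmat, Matrix.fromBlocks, Matrix.sub_apply, Matrix.smul_apply, Matrix.one_apply, hSdef]
  rw [hE, Matrix.det_fromBlocks₂₂, hdetS]
  -- the linear system solution
  set v : Matrix (Fin m) (Fin 1) ℂ :=
    Matrix.of (fun k _ => ((x - (dd m:ℂ))⁻¹)^((k:ℕ)+1)) with hvdef
  have hv : S * v = ccolC := by
    ext r c
    rw [Matrix.mul_apply]
    rcases Nat.eq_zero_or_pos (r : ℕ) with hr | hr
    · rw [Finset.sum_eq_single r]
      · rw [hSapp, if_pos rfl, if_neg (by omega)]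
        simp [hvdef, hccol, hr]
        exact mul_inv_cancel₀ hy0
      · intro b _ hb
        rw [hSapp]
        have hb' : (r:ℕ) ≠ (b:ℕ) := fun hh => hb (Fin.ext hh.symm)
        rw [if_neg hb', if_neg (by omega)]
        simp
      · intro h; exact absurd (Finset.mem_univ _) h
    · have hrm : (r:ℕ) - 1 < m := by omega
      set k0 : Fin m := ⟨(r:ℕ) - 1, hrm⟩ with hk0
      have hsum : ∀ b : Fin m, b ≠ k0 → b ≠ r → S r b * v b c = 0 := by
        intro b hb1 hb2
        rw [hSapp]
        have h1' : (r:ℕ) ≠ (b:ℕ) := fun hh => hb2 (Fin.ext hh.symm)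
        have h2' : (r:ℕ) ≠ (b:ℕ) + 1 := by
          intro hh
          apply hb1
          apply Fin.ext
          simp [hk0, hh]
        rw [if_neg (fun hh => h1' hh), if_neg h2']
        simp
      have hk0r : k0 ≠ r := by
        intro hh
        have := congrArg Fin.val hh
        simp [hk0] at this
        omega
      rw [Finset.sum_eq_add_of_mem k0 r (Finset.mem_univ _) (Finset.mem_univ _) hk0r
        (fun b _ hb => hsum b hb.1 hb.2)]
      rw [hSapp, hSapp]
      rw [if_neg (by simp [hk0]; omega), if_pos (by simp [hk0]; omega), if_pos rfl,
        if_neg (by omega)]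
      have hvk : v k0 c = ((x - (dd m:ℂ))⁻¹)^((r:ℕ)) := by
        simp [hvdef, hk0]
        congr 1
        omega
      rw [hvk]
      simp [hvdef, hccol, hr.ne']
      rw [pow_succ]
      field_simp
      ring
  have hinv : ⅟S * (-ccolC) = -v := by
    rw [← hv, Matrix.mul_neg]
    exact congrArg Neg.neg (Matrix.invOf_mul_cancel_left S v)
  rw [Matrix.mul_assoc, hinv, Matrix.det_fin_one]
  have hentry : (P - Q * (-v)) 0 0
      = x - ∑ c : Fin m, ((gg m (m - 1 - (c:ℕ)) : ℝ):ℂ) * ((x - (dd m:ℂ))⁻¹)^((c:ℕ)+1) := by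
    rw [Matrix.sub_apply, Matrix.mul_apply, hP]
    simp only [Matrix.smul_apply, Matrix.one_apply_eq, smul_eq_mul, mul_one]
    congr 1
    refine Finset.sum_congr rfl fun c _ => ?_
    simp only [hQ, hvdef, Matrix.neg_apply, Matrix.of_apply, neg_mul, mul_neg, neg_neg]
  rw [hentry]
  rw [mul_sub]
  rw [Finset.mul_sum]
  have hterm : ∀ c : Fin m,
      (x - (dd m:ℂ))^m * (((gg m (m - 1 - (c:ℕ)) : ℝ):ℂ) * ((x - (dd m:ℂ))⁻¹)^((c:ℕ)+1))
      = ((gg m (m - 1 - (c:ℕ)) : ℝ):ℂ) * (x - (dd m:ℂ))^(m - 1 - (c:ℕ)) := by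
    intro c
    have hpow : (x - (dd m:ℂ))^m = (x - (dd m:ℂ))^(m-1-(c:ℕ)) * (x - (dd m:ℂ))^((c:ℕ)+1) := by
      rw [← pow_add]; congr 1; omega
    rw [hpow]
    have : (x - (dd m:ℂ))^((c:ℕ)+1) * ((x - (dd m:ℂ))⁻¹)^((c:ℕ)+1) = 1 := by
      rw [← mul_pow, mul_inv_cancel₀ hy0, one_pow]
    calc (x - (dd m:ℂ))^(m-1-(c:ℕ)) * (x - (dd m:ℂ))^((c:ℕ)+1) *
          (((gg m (m - 1 - (c:ℕ)) : ℝ):ℂ) * ((x - (dd m:ℂ))⁻¹)^((c:ℕ)+1))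
        = ((gg m (m - 1 - (c:ℕ)) : ℝ):ℂ) * (x - (dd m:ℂ))^(m-1-(c:ℕ))
          * ((x - (dd m:ℂ))^((c:ℕ)+1) * ((x - (dd m:ℂ))⁻¹)^((c:ℕ)+1)) := by ring
      _ = _ := by rw [this, mul_one]
  rw [Finset.sum_congr rfl (fun c _ => hterm c)]
  have hreflect : ∑ c : Fin m, ((gg m (m - 1 - (c:ℕ)) : ℝ):ℂ) * (x - (dd m:ℂ))^(m - 1 - (c:ℕ))
      = ∑ j ∈ Finset.range m, ((gg m j : ℝ):ℂ) * (x - (dd m:ℂ))^j := by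
    rw [Fin.sum_univ_eq_sum_range (fun c => ((gg m (m - 1 - c) : ℝ):ℂ) * (x - (dd m:ℂ))^(m - 1 - c))]
    exact Finset.sum_range_reflect (fun j => ((gg m j : ℝ):ℂ) * (x - (dd m:ℂ))^j) m
  rw [hreflect]
  have hk := key m h1 (x - (dd m:ℂ))
  have h1' : x - (1:ℂ) = (x - (dd m:ℂ)) - (lam m : ℂ) := by
    have := dd_add_lam m h1
    have hc : ((dd m:ℝ):ℂ) + ((lam m:ℝ):ℂ) = 1 := by exact_mod_cast congrArg Complex.ofReal this
    linear_combination hc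
  have h2' : x - (lam m:ℂ) = (x - (dd m:ℂ)) + (nu m : ℂ) := by
    have := lam_add_nu m h1
    have hc : ((lam m:ℝ):ℂ) + ((nu m:ℝ):ℂ) = ((dd m:ℝ):ℂ) := by
      exact_mod_cast congrArg Complex.ofReal this
    linear_combination -hc
  rw [h1', h2', ← hk]
  ring

lemma charpoly_Bmat (m : ℕ) (h1 : 1 ≤ m) :
    ((Bmat m).map Complex.ofReal).charpoly
      = (X - C 1) * (X - C ((lam m : ℝ):ℂ))^m := by
  have hsub : (((Bmat m).map Complex.ofReal).charpoly
      - ((X - C 1) * (X - C ((lam m:ℝ):ℂ))^m)) = 0 := by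
    apply Polynomial.eq_zero_of_infinite_isRoot
    have hinf : ({((dd m:ℝ):ℂ)}ᶜ : Set ℂ).Infinite :=
      Set.Finite.infinite_compl (Set.finite_singleton _)
    refine hinf.mono ?_
    intro x hx
    have hx' : x ≠ ((dd m:ℝ):ℂ) := hx
    have h1e : (((Bmat m).map Complex.ofReal).charpoly).eval x
        = (x-1)*(x-((lam m:ℝ):ℂ))^m := by
      rw [eval_charpoly']; exact det_eval m h1 x hx'
    simp only [Set.mem_setOf_eq, Polynomial.IsRoot, Polynomial.eval_sub, h1e]
    simp
  linear_combination hsub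


theorem exists_extremal_matrix (n : ℕ) (hn : 2 ≤ n) :
    ∃ A : Matrix (Fin n) (Fin n) ℝ,
      (∀ i j, 0 ≤ A i j) ∧
      A ⟨0, by omega⟩ ⟨0, by omega⟩ = 0 ∧
      specRad A = 1 ∧
      (eigs A).toFinset.card = 2 ∧
      spread A = (n : ℝ) / (2 * ((n : ℝ) - 1)) := by
  obtain ⟨m, rfl⟩ : ∃ m, n = m + 1 := ⟨n - 1, by omega⟩
  have h1 : 1 ≤ m := by omega
  have hlam0 := lam_nonneg h1
  have hlam1 := lam_lt_one h1
  set e : Fin 1 ⊕ Fin m ≃ Fin (m + 1) :=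
    finSumFinEquiv.trans (finCongr (Nat.add_comm 1 m)) with he
  set A : Matrix (Fin (m+1)) (Fin (m+1)) ℝ := (Matrix.reindex e e) (Bmat m) with hA
  have hmap : A.map Complex.ofReal
      = (Matrix.reindex e e) ((Bmat m).map Complex.ofReal) := by
    ext i j
    simp [hA, Matrix.reindex_apply, Matrix.submatrix_apply, Matrix.map_apply]
  have hcp : (A.map Complex.ofReal).charpoly
      = (X - C 1) * (X - C ((lam m:ℝ):ℂ))^m := by
    rw [hmap, Matrix.charpoly_reindex, charpoly_Bmat m h1]
  have heigs : eigs A = {1} + m • {((lam m:ℝ):ℂ)} := by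
    rw [eigs, hcp, Polynomial.roots_mul (mul_ne_zero (Polynomial.X_sub_C_ne_zero 1)
      (pow_ne_zero _ (Polynomial.X_sub_C_ne_zero _))), Polynomial.roots_pow,
      Polynomial.roots_X_sub_C, Polynomial.roots_X_sub_C]
  have hmem : ∀ z : ℂ, z ∈ eigs A ↔ z = 1 ∨ z = ((lam m:ℝ):ℂ) := by
    intro z
    rw [heigs]
    have hm : m ≠ 0 := by omega
    simp [Multiset.mem_nsmul, hm]
  have hne1 : ((lam m:ℝ):ℂ) ≠ 1 := by
    rw [Ne, Complex.ofReal_eq_one]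
    linarith
  refine ⟨A, ?_, ?_, ?_, ?_, ?_⟩
  · intro i j
    rw [hA, Matrix.reindex_apply, Matrix.submatrix_apply]
    rcases e.symm i with p | p <;> rcases e.symm j with q | q
    · simp [Bmat]
    · simp only [Bmat, Matrix.fromBlocks_apply₁₂, Matrix.of_apply]
      exact gg_nonneg h1 (by omega)
    · simp only [Bmat, Matrix.fromBlocks_apply₂₁, Matrix.of_apply]
      split_ifs <;> norm_num
    · simp only [Bmat, Matrix.fromBlocks_apply₂₂, Mblk, Matrix.of_apply]
      split_ifs
      exacts [dd_nonneg h1, zero_le_one, le_refl 0]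
  · have h0 : e.symm ⟨0, by omega⟩ = Sum.inl 0 := by
      rw [Equiv.symm_apply_eq]
      apply Fin.ext
      simp [he]
    rw [hA, Matrix.reindex_apply, Matrix.submatrix_apply, h0]
    simp [Bmat]
  · rw [specRad]
    have hset : {r : ℝ | ∃ μ ∈ eigs A, r = ‖μ‖} = {1, lam m} := by
      ext r
      simp only [Set.mem_setOf_eq, Set.mem_insert_iff, Set.mem_singleton_iff]
      constructor
      · rintro ⟨μ, hμ, rfl⟩
        rcases (hmem μ).1 hμ with rfl | rfl
        · left; simp
        · right; rw [Complex.norm_real, Real.norm_eq_abs, abs_of_nonneg hlam0]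
      · rintro (rfl | rfl)
        · exact ⟨1, (hmem 1).2 (Or.inl rfl), by simp⟩
        · exact ⟨_, (hmem _).2 (Or.inr rfl),
            by rw [Complex.norm_real, Real.norm_eq_abs, abs_of_nonneg hlam0]⟩
    rw [hset, csSup_pair]
    exact sup_eq_left.mpr (le_of_lt hlam1)
  · rw [heigs, Multiset.toFinset_add, Multiset.toFinset_nsmul _ m (by omega),
      Multiset.toFinset_singleton, Multiset.toFinset_singleton]
    rw [show ({1} : Finset ℂ) ∪ {((lam m:ℝ):ℂ)} = insert 1 {((lam m:ℝ):ℂ)} from rfl]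
    rw [Finset.card_insert_of_notMem (by simpa using hne1.symm)]
    simp
  · rw [spread]
    have habs1 : ‖(1 - ((lam m:ℝ):ℂ))‖ = 1 - lam m := by
      rw [show (1 : ℂ) - ((lam m:ℝ):ℂ) = (((1 - lam m : ℝ)):ℂ) by push_cast; ring,
        Complex.norm_real, Real.norm_eq_abs, abs_of_nonneg (by linarith)]
    have habs2 : ‖(((lam m:ℝ):ℂ) - 1)‖ = 1 - lam m := by
      rw [norm_sub_rev]
      exact habs1
    have hset : {r : ℝ | ∃ μ ∈ eigs A, ∃ ν ∈ eigs A, r = ‖μ - ν‖}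
        = {0, 1 - lam m} := by
      ext r
      simp only [Set.mem_setOf_eq, Set.mem_insert_iff, Set.mem_singleton_iff]
      constructor
      · rintro ⟨μ, hμ, ν, hν, rfl⟩
        rcases (hmem μ).1 hμ with rfl | rfl <;> rcases (hmem ν).1 hν with rfl | rfl
        · left; simp
        · right; exact habs1
        · right; exact habs2
        · left; simp
      · rintro (rfl | rfl)
        · exact ⟨1, (hmem 1).2 (Or.inl rfl), 1, (hmem 1).2 (Or.inl rfl), by simp⟩
        · exact ⟨1, (hmem 1).2 (Or.inl rfl), _, (hmem _).2 (Or.inr rfl), habs1.symm⟩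
    rw [hset, csSup_pair]
    have : (0:ℝ) ⊔ (1 - lam m) = 1 - lam m := sup_eq_right.mpr (by linarith)
    rw [this, lam]
    have hm0 : (m:ℝ) ≠ 0 := ne_of_gt (mpos h1)
    push_cast
    field_simp
    rw [add_sub_cancel_right, mul_div_cancel_left₀ _ hm0]; ring
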